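/- Independence of the cyclic inequalities: let k ≥ 1 and define S(I) := min{ |I|, (2k+2) − |I|, k } for subsets I ⊆ {1,…,2k+2}. Then: (i) the cyclic inequality C_{2k+1}(k+1,k) is violated when applied to the singleton regions A_i = {i}, i = 1,…,2k+1: Σ_{i=1}^{2k+1} S({i+1,…,i+k+1}) − Σ_{i=1}^{2k+1} S({i+1,…,i+k}) − S({1,…,2k+1}) = −1 < 0 (cyclic windows with indices taken modulo 2k+1 inside {1,…,2k+1}); and (ii) for every integer l with 1 ≤ l < k and every family of pairwise disjoint nonempty subsets B_1,…,B_{2l+1} ⊆ {1,…,2k+2}, the coarse-grained entropies Ŝ(J) := S(∪_{j∈J} B_j), J ⊆ {1,…,2l+1}, satisfy the cyclic inequality Σ_{i=1}^{2l+1} Ŝ({i+1,…,i+l+1}) − Σ_{i=1}^{2l+1} Ŝ({i+1,…,i+l}) − Ŝ({1,…,2l+1}) ≥ 0 (cyclic windows modulo 2l+1). -/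

import Mathlib

/-- The cyclic window of `a` consecutive indices starting at `i` (mod `m`). -/
def cycWindow (m i a : ℕ) : Finset (Fin m) :=
  Finset.univ.filter fun j => ∃ t < a, (i + t) % m = (j : ℕ)

/-- The entropy function of the `(2k+2)`-party state `Σ_x |Ax⟩`:
`S(I) = min(|I|, (2k+2) − |I|, k)`. -/
noncomputable def Sspec (k : ℕ) (I : Finset (Fin (2 * k + 2))) : ℝ :=
  min (min (I.card : ℝ) ((2 * k + 2 : ℝ) - (I.card : ℝ))) (k : ℝ)

def Fent (k : ℕ) (x : ℤ) : ℤ := min (min x (2*k+2 - x)) k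

def gF (k : ℕ) (N x : ℤ) : ℤ := Fent k (N - x) - Fent k x

lemma gF_anti (k : ℕ) (N x y : ℤ) (hN : N ≤ 2*k+2) (h : x ≤ y) : gF k N y ≤ gF k N x := by
  simp only [gF, Fent, min_def]; split_ifs <;> omega

lemma Ico_int_succ (a b : ℤ) (h : a ≤ b) : Finset.Ico a (b+1) = insert b (Finset.Ico a b) := by
  ext x; simp [Finset.mem_Ico]; omega

lemma telescope (G : ℤ → ℤ) (a : ℤ) (n : ℕ) :
    ∑ x ∈ Finset.Ico a (a + (n:ℤ)), (G x - G (x+1)) = G a - G (a + n) := by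
  induction n with
  | zero => simp
  | succ n ih =>
    have h2 : a + ((n:ℕ):ℤ) + 1 = a + ((n+1:ℕ):ℤ) := by push_cast; ring
    rw [← h2, Ico_int_succ a _ (by omega), Finset.sum_insert (by simp), ih]
    ring

lemma sum_shift_step (m : ℕ) (h : ℕ → ℤ) (hp : ∀ j, h (j + m) = h j) (n : ℕ) :
    ∑ t ∈ Finset.range m, h (n + 1 + t) = ∑ t ∈ Finset.range m, h (n + t) := by
  cases m with
  | zero => simp
  | succ m' =>
    rw [Finset.sum_range_succ, Finset.sum_range_succ' (fun t => h (n + t))]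
    have h1 : h (n + 1 + m') = h (n + 0) := by
      have := hp n
      rw [show n + (m' + 1) = n + 1 + m' from by omega] at this
      simpa using this
    rw [h1]
    congr 1
    exact Finset.sum_congr rfl (fun t _ => by rw [show n + 1 + t = n + (t+1) from by omega])

lemma sum_shift_periodic (m : ℕ) (h : ℕ → ℤ) (hp : ∀ j, h (j + m) = h j) :
    ∀ i, ∑ t ∈ Finset.range m, h (i + t) = ∑ t ∈ Finset.range m, h t := by
  intro i
  induction i with
  | zero => simp
  | succ n ih => rw [← ih, sum_shift_step m h hp n]

def Wsum (c : ℕ → ℕ) (a i : ℕ) : ℤ := ∑ t ∈ Finset.range a, (c (i+t) : ℤ)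

lemma Wsum_succ (c : ℕ → ℕ) (a i : ℕ) : Wsum c (a+1) i = Wsum c a i + c (i+a) := by
  simp [Wsum, Finset.sum_range_succ]

lemma Wsum_add (c : ℕ → ℕ) (a b i : ℕ) : Wsum c (a+b) i = Wsum c a i + Wsum c b (i+a) := by
  induction b with
  | zero => simp [Wsum]
  | succ n ih =>
    rw [show a + (n+1) = (a+n)+1 from rfl, Wsum_succ, ih, Wsum_succ]
    rw [show i + (a+n) = i + a + n from by omega]
    ring

lemma Wsum_one (c : ℕ → ℕ) (i : ℕ) : Wsum c 1 i = c i := by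
  simp [Wsum]

lemma Wsum_ge (c : ℕ → ℕ) (hc1 : ∀ j, 1 ≤ c j) (a i : ℕ) : (a:ℤ) ≤ Wsum c a i := by
  calc (a:ℤ) = ∑ t ∈ Finset.range a, (1:ℤ) := by simp
  _ ≤ Wsum c a i := Finset.sum_le_sum (fun t _ => by exact_mod_cast hc1 (i+t))

section Periodic
variable (m : ℕ) (c : ℕ → ℕ) (hper : ∀ j, c (j + m) = c j)
include hper

lemma c_per_mul (i s : ℕ) : c (i + m*s) = c i := by
  induction s with
  | zero => simp
  | succ n ih => rw [show i + m*(n+1) = (i + m*n) + m from by ring, hper, ih]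

lemma c_mod (j : ℕ) (hm : 0 < m) : c j = c (j % m) := by
  conv_lhs => rw [show j = j % m + m * (j / m) from by rw [Nat.mod_add_div]]
  rw [c_per_mul m c hper]

lemma Wsum_periodic (a i : ℕ) : Wsum c a (i + m) = Wsum c a i := by
  unfold Wsum
  refine Finset.sum_congr rfl (fun t _ => ?_)
  rw [show i + m + t = (i + t) + m from by omega, hper]

lemma Wsum_per_mul (a i s : ℕ) : Wsum c a (i + m*s) = Wsum c a i := by
  induction s with
  | zero => simp
  | succ n ih => rw [show i + m*(n+1) = (i + m*n) + m from by ring, Wsum_periodic m c hper, ih]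

lemma Wsum_mod (a j : ℕ) (hm : 0 < m) : Wsum c a j = Wsum c a (j % m) := by
  conv_lhs => rw [show j = j % m + m * (j / m) from by rw [Nat.mod_add_div]]
  rw [Wsum_per_mul m c hper]

lemma Wsum_total (i : ℕ) : Wsum c m i = Wsum c m 0 := by
  have h := sum_shift_periodic m (fun j => (c j : ℤ)) (fun j => by exact_mod_cast hper j) i
  simpa [Wsum] using h

end Periodic

lemma gF_neg (k : ℕ) (N x : ℤ) : gF k N (N - x) = - gF k N x := by
  simp only [gF, sub_sub_cancel]; ring

lemma core (k l : ℕ) (c : ℕ → ℕ) (hl : 1 ≤ l) (hlk : l < k)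
    (hper : ∀ j, c (j + (2*l+1)) = c j) (hc1 : ∀ j, 1 ≤ c j)
    (hNub : Wsum c (2*l+1) 0 ≤ 2*k+2) :
    Fent k (Wsum c (2*l+1) 0) + ∑ i ∈ Finset.range (2*l+1), Fent k (Wsum c l i)
      ≤ ∑ i ∈ Finset.range (2*l+1), Fent k (Wsum c (l+1) i) := by
  set m := 2*l+1 with hm
  set N := Wsum c m 0 with hNdef
  set V : ℕ → ℤ := fun i => Wsum c l i with hV
  have hm0 : 0 < m := by omega
  -- basic identities
  have idV : ∀ i, V i + V (i+l) + (c (i+2*l) : ℤ) = N := by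
    intro i
    have h1 : Wsum c (l+l) i = V i + V (i+l) := Wsum_add c l l i
    have h2 : Wsum c (l+l+1) i = Wsum c (l+l) i + (c (i+(l+l)) : ℤ) := Wsum_succ c (l+l) i
    have h3 : Wsum c m i = N := Wsum_total m c hper i
    rw [show m = l+l+1 from by omega] at h3
    rw [h2, h1] at h3
    rw [show i + 2*l = i + (l+l) from by ring]
    linarith
  have idU : ∀ i, Wsum c (l+1) i = N - V (i+(l+1)) := by
    intro i
    have h1 : Wsum c ((l+1)+l) i = Wsum c (l+1) i + V (i+(l+1)) := Wsum_add c (l+1) l i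
    have h3 : Wsum c m i = N := Wsum_total m c hper i
    rw [show m = (l+1)+l from by omega] at h3
    rw [h1] at h3
    linarith
  have hVper : ∀ i, V (i + m) = V i := fun i => Wsum_periodic m c hper l i
  have hVl : ∀ i, (l:ℤ) ≤ V i := fun i => Wsum_ge c hc1 l i
  have hVub : ∀ i, V i ≤ N - l - 1 := by
    intro i
    have := idV i
    have h1 := hVl (i+l)
    have h2 := hc1 (i+2*l)
    have : (c (i+2*l):ℤ) ≥ 1 := by exact_mod_cast h2
    omega
  have hNm : (m:ℤ) ≤ N := Wsum_ge c hc1 m 0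
  -- reduce goal to sum of gF
  have hUsum : ∑ i ∈ Finset.range m, Fent k (Wsum c (l+1) i)
      = ∑ i ∈ Finset.range m, Fent k (N - V i) := by
    rw [Finset.sum_congr rfl (fun i _ => by rw [idU i, show i + (l+1) = (l+1) + i from by omega])]
    exact sum_shift_periodic m (fun j => Fent k (N - V j)) (fun j => by show Fent k (N - V (j+m)) = _; rw [hVper j]) (l+1)
  rw [hUsum]
  have hgoal : Fent k N ≤ ∑ i ∈ Finset.range m, gF k N (V i) → 
      Fent k N + ∑ i ∈ Finset.range m, Fent k (V i) ≤ ∑ i ∈ Finset.range m, Fent k (N - V i) := by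
    intro h
    have : ∑ i ∈ Finset.range m, gF k N (V i)
        = ∑ i ∈ Finset.range m, Fent k (N - V i) - ∑ i ∈ Finset.range m, Fent k (V i) := by
      rw [← Finset.sum_sub_distrib]; rfl
    linarith
  apply hgoal
  by_cases hcase : ∀ i, N - k - 1 ≤ V i
  · -- Case I: all windows large
    have hVk : ∀ i, V i ≤ k := by
      intro i
      have h0 := idV i
      have h1 := hcase (i+l)
      have h2 : (1:ℤ) ≤ (c (i+2*l) : ℤ) := by exact_mod_cast hc1 (i+2*l)
      omega
    have hpt : ∀ i ∈ Finset.range m,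
        (N - 2*(V i)) - (if V i = N - k - 1 then 1 else 0) ≤ gF k N (V i) := by
      intro i _
      have h1 := hVl i
      have h2 := hVk i
      have h3 := hcase i
      simp only [gF, Fent, min_def]
      split_ifs <;> omega
    have hsum := Finset.sum_le_sum hpt
    have hSV : ∑ i ∈ Finset.range m, V i = l * N := by
      have : ∑ i ∈ Finset.range m, V i
          = ∑ t ∈ Finset.range l, ∑ i ∈ Finset.range m, (c (i+t) : ℤ) := by
        rw [Finset.sum_comm]; rfl
      rw [this]
      have hinner : ∀ t, ∑ i ∈ Finset.range m, (c (i+t) : ℤ) = N := by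
        intro t
        have := sum_shift_periodic m (fun j => (c j : ℤ))
            (fun j => by exact_mod_cast hper j) t
        calc ∑ i ∈ Finset.range m, (c (i+t) : ℤ)
            = ∑ i ∈ Finset.range m, (c (t+i) : ℤ) :=
              Finset.sum_congr rfl (fun i _ => by rw [Nat.add_comm])
          _ = ∑ i ∈ Finset.range m, (c i : ℤ) := this
          _ = N := by rw [hNdef]; unfold Wsum; exact Finset.sum_congr rfl (fun i _ => by rw [Nat.zero_add])
      rw [Finset.sum_congr rfl (fun t _ => hinner t), Finset.sum_const, Finset.card_range]
      simp [mul_comm]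
    set b : ℕ := ((Finset.range m).filter (fun i => V i = N - k - 1)).card with hb
    have hSind : ∑ i ∈ Finset.range m, (if V i = N - k - 1 then (1:ℤ) else 0) = b := by
      rw [hb, Finset.sum_boole]
    have hsum2 : N - (b:ℤ) ≤ ∑ i ∈ Finset.range m, gF k N (V i) := by
      have e1 : ∑ i ∈ Finset.range m, ((N - 2*(V i)) - (if V i = N - k - 1 then 1 else 0))
          = (m : ℤ) * N - 2*(l*N) - b := by
        rw [Finset.sum_sub_distrib, hSind, Finset.sum_sub_distrib, ← Finset.mul_sum, hSV,
          Finset.sum_const, Finset.card_range]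
        push_cast [hm, nsmul_eq_mul]
        ring
      rw [e1] at hsum
      calc N - (b:ℤ) = (m:ℤ)*N - 2*((l:ℤ)*N) - b := by push_cast [hm]; ring
        _ ≤ _ := hsum
    have hble : (b:ℤ) ≤ (m:ℤ) := by
      have h := Finset.card_filter_le (Finset.range m) (fun i => V i = N - k - 1)
      rw [Finset.card_range] at h
      exact_mod_cast h
    -- now show Fent k N ≤ N - b by subcases
    refine le_trans ?_ hsum2
    by_cases hlt : N - k - 1 < l
    · have hb0 : b = 0 := by
        rw [hb, Finset.card_eq_zero, Finset.filter_eq_empty_iff]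
        intro i _
        have := hVl i
        omega
      rw [hb0]
      simp only [Fent, min_def]
      split_ifs <;> omega
    · push_neg at hlt
      by_cases heq : N - k - 1 = l
      · -- need b ≤ 2l
        have hb2l : (b:ℤ) ≤ 2*l := by
          by_contra hcon
          push_neg at hcon
          have hbm : b = m := by omega
          have hall : ∀ i ∈ Finset.range m, V i = N - k - 1 := by
            intro i hi
            have : (Finset.range m).filter (fun i => V i = N - k - 1) = Finset.range m := by
              apply Finset.eq_of_subset_of_card_le (Finset.filter_subset _ _)
              rw [Finset.card_range, ← hb, hbm]
            rw [← this] at hi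
            exact (Finset.mem_filter.mp hi).2
          have hcone : ∀ j ∈ Finset.range m, (c j : ℤ) = 1 := by
            intro j hj
            have hVj : V j = l := by rw [hall j hj, heq]
            have hsplit : Wsum c l j = Wsum c 1 j + Wsum c (l-1) (j+1) := by
              rw [← Wsum_add, show 1 + (l-1) = l from by omega]
            have h1 : (c j : ℤ) ≤ 1 := by
              have h2 := Wsum_ge c hc1 (l-1) (j+1)
              rw [Wsum_one] at hsplit
              have : Wsum c l j = V j := rfl
              have hc' : ((l:ℕ):ℤ) - 1 ≤ Wsum c (l-1) (j+1) := by
                have : ((l-1:ℕ):ℤ) = (l:ℤ) - 1 := by omega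
                omega
              omega
            have h2 : (1:ℤ) ≤ (c j : ℤ) := by exact_mod_cast hc1 j
            omega
          have hNm' : N = m := by
            rw [hNdef]
            unfold Wsum
            have : ∑ t ∈ Finset.range m, (c (0+t) : ℤ) = ∑ t ∈ Finset.range m, 1 := by
              refine Finset.sum_congr rfl (fun t ht => ?_)
              rw [Nat.zero_add]; exact hcone t ht
            rw [this]
            simp
          have : (m:ℤ) = 2*l+1 := by exact_mod_cast congrArg Nat.cast hm
          omega
        simp only [Fent, min_def]
        split_ifs <;> omega
      · have hge : (l:ℤ) + 1 ≤ N - k - 1 := by omega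
        have : (m:ℤ) = 2*l+1 := by exact_mod_cast congrArg Nat.cast hm
        simp only [Fent, min_def]
        split_ifs <;> omega
  · -- Case II
    push_neg at hcase
    obtain ⟨i0, hi0⟩ := hcase
    set w : ℤ := V i0 with hw
    have hw1 : (l:ℤ) ≤ w := hVl i0
    have hw2 : w ≤ N - k - 2 := by omega
    have hcov : ∀ x : ℤ, w ≤ x → x < N - w →
        ∃ j, j < m ∧ V j ≤ x ∧ x < V j + c (j + 2*l) := by
      intro x hx1 hx2
      by_contra hnc
      push_neg at hnc
      have hnc' : ∀ j, V j ≤ x → V j + (c (j + 2*l) : ℤ) ≤ x := by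
        intro j hj
        have hjm := Nat.mod_lt j hm0
        have hVm : V (j % m) = V j := (Wsum_mod m c hper l j hm0).symm
        have hcm : c (j % m + 2*l) = c (j + 2*l) := by
          rw [c_mod m c hper (j % m + 2*l) hm0, c_mod m c hper (j + 2*l) hm0]
          congr 1
          conv_rhs => rw [Nat.add_mod]
          rw [Nat.add_mod (j % m) (2*l) m, Nat.mod_mod_of_dvd j (dvd_refl m)]
        have h := hnc (j % m) hjm (by rw [hVm]; exact hj)
        rw [hVm, hcm] at h
        exact h
      have hstep : ∀ j, V j ≤ x → V (j + 2*l) ≤ x := by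
        intro j hj
        have h1 := hnc' j hj
        have h2 := idV j
        have h3 := idV (j + l)
        have hc3 : (1:ℤ) ≤ (c (j + l + 2*l) : ℤ) := by exact_mod_cast hc1 _
        rw [show j + l + l = j + 2*l from by ring] at h3
        omega
      have hiter : ∀ t, V (i0 + 2*l*t) ≤ x := by
        intro t
        induction t with
        | zero => rw [show i0 + 2*l*0 = i0 from by ring, ← hw]; exact hx1
        | succ n ih =>
          have h := hstep _ ih
          rw [show i0 + 2*l*n + 2*l = i0 + 2*l*(n+1) from by ring] at h
          exact h
      have hVl' : V (i0 + 2*l*l) ≤ x := hiter l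
      have hlast := hnc' _ hVl'
      have hid := idV (i0 + 2*l*l)
      have hper' : V (i0 + 2*l*l + l) = w := by
        rw [show i0 + 2*l*l + l = i0 + m*l from by rw [hm]; ring]
        exact Wsum_per_mul m c hper l i0 l
      omega
    have hδ : ∀ x : ℤ, 0 ≤ gF k N x - gF k N (x+1) := by
      intro x
      have := gF_anti k N x (x+1) hNub (by omega)
      omega
    have hD : ∀ i, gF k N (V i) + gF k N (V (i+l))
        = ∑ x ∈ Finset.Ico (V i) (V i + ((c (i+2*l) : ℕ) : ℤ)), (gF k N x - gF k N (x+1)) := by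
      intro i
      rw [telescope (gF k N) (V i) (c (i+2*l))]
      have h2 := idV i
      have h3 : V i + ((c (i+2*l):ℕ):ℤ) = N - V (i+l) := by omega
      rw [h3, gF_neg]
      ring
    have hsum1 : ∑ i ∈ Finset.range m, (gF k N (V i) + gF k N (V (i+l)))
        = 2 * ∑ i ∈ Finset.range m, gF k N (V i) := by
      rw [Finset.sum_add_distrib]
      have hshift : ∑ i ∈ Finset.range m, gF k N (V (i+l)) = ∑ i ∈ Finset.range m, gF k N (V i) := by
        rw [Finset.sum_congr rfl (fun i _ => by rw [show i + l = l + i from by omega])]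
        exact sum_shift_periodic m (fun j => gF k N (V j))
          (fun j => by show gF k N (V (j+m)) = _; rw [hVper j]) l
      rw [hshift]; ring
    classical
    set T : Finset ℤ := Finset.Ico w (N - w) with hT
    set ch : ℤ → ℕ := fun x =>
      if hx : ∃ j, j < m ∧ V j ≤ x ∧ x < V j + c (j + 2*l) then hx.choose else 0 with hch
    have hmap : ∀ x ∈ T, ch x ∈ Finset.range m := by
      intro x hx
      rw [hT, Finset.mem_Ico] at hx
      obtain ⟨j, hj⟩ := hcov x hx.1 hx.2
      have hex : ∃ j, j < m ∧ V j ≤ x ∧ x < V j + c (j + 2*l) := ⟨j, hj⟩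
      rw [hch]
      simp only [dif_pos hex]
      exact Finset.mem_range.mpr hex.choose_spec.1
    have hfib := Finset.sum_fiberwise_of_maps_to hmap (fun x => gF k N x - gF k N (x+1))
    have hcovineq : ∑ x ∈ T, (gF k N x - gF k N (x+1))
        ≤ ∑ i ∈ Finset.range m, (gF k N (V i) + gF k N (V (i+l))) := by
      rw [← hfib]
      refine Finset.sum_le_sum (fun j hj => ?_)
      rw [hD j]
      refine Finset.sum_le_sum_of_subset_of_nonneg ?_ (fun x _ _ => hδ x)
      intro x hx
      rw [Finset.mem_filter] at hx
      obtain ⟨hxT, hchx⟩ := hx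
      rw [hT, Finset.mem_Ico] at hxT
      obtain ⟨j', hj'⟩ := hcov x hxT.1 hxT.2
      have hex : ∃ j, j < m ∧ V j ≤ x ∧ x < V j + c (j + 2*l) := ⟨j', hj'⟩
      rw [hch] at hchx
      simp only [dif_pos hex] at hchx
      have hspec := hex.choose_spec
      rw [hchx] at hspec
      rw [Finset.mem_Ico]
      exact ⟨hspec.2.1, hspec.2.2⟩
    have h2w : 0 ≤ N - 2*w := by omega
    have hTsum : ∑ x ∈ T, (gF k N x - gF k N (x+1)) = 2 * gF k N w := by
      have hTeq : T = Finset.Ico w (w + ((N - 2*w).toNat : ℤ)) := by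
        rw [hT]
        congr 1
        rw [Int.toNat_of_nonneg h2w]
        ring
      rw [hTeq, telescope (gF k N) w ((N-2*w).toNat), Int.toNat_of_nonneg h2w,
        show w + (N - 2*w) = N - w from by ring]
      have hneg := gF_neg k N w
      omega
    have hgw : Fent k N ≤ gF k N w := by
      simp only [gF, Fent, min_def]
      split_ifs <;> omega
    rw [hsum1] at hcovineq
    rw [hTsum] at hcovineq
    omega

lemma sspec_eq (k : ℕ) (I : Finset (Fin (2*k+2))) :
    Sspec k I = ((Fent k (I.card) : ℤ) : ℝ) := by
  unfold Sspec Fent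
  push_cast
  norm_num

lemma window_mod_inj (m i a : ℕ) (ha : a ≤ m) {t t' : ℕ} (ht : t < a) (ht' : t' < a)
    (h : (i + t) % m = (i + t') % m) : t = t' := by
  have h1 : t ≡ t' [MOD m] := Nat.ModEq.add_left_cancel' i h
  have h2 : t % m = t' % m := h1
  rwa [Nat.mod_eq_of_lt (by omega), Nat.mod_eq_of_lt (by omega)] at h2

lemma cycWindow_eq_image (m i a : ℕ) (hm : 0 < m) :
    cycWindow m i a
      = (Finset.range a).image (fun t => (⟨(i+t) % m, Nat.mod_lt _ hm⟩ : Fin m)) := by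
  ext j
  simp only [cycWindow, Finset.mem_filter, Finset.mem_univ, true_and, Finset.mem_image,
    Finset.mem_range, Fin.ext_iff]

lemma card_cycWindow (m i a : ℕ) (hm : 0 < m) (ha : a ≤ m) :
    (cycWindow m i a).card = a := by
  rw [cycWindow_eq_image m i a hm, Finset.card_image_of_injOn, Finset.card_range]
  intro t ht t' ht' h
  simp only [Finset.coe_range, Set.mem_Iio] at ht ht'
  rw [Fin.ext_iff] at h
  exact window_mod_inj m i a ha ht ht' h

lemma sum_cycWindow (m i a : ℕ) (hm : 0 < m) (ha : a ≤ m) (f : Fin m → ℕ) :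
    ∑ j ∈ cycWindow m i a, f j = ∑ t ∈ Finset.range a, f ⟨(i+t) % m, Nat.mod_lt _ hm⟩ := by
  rw [cycWindow_eq_image m i a hm, Finset.sum_image]
  intro t ht t' ht' h
  rw [Fin.ext_iff] at h
  exact window_mod_inj m i a ha (Finset.mem_range.mp ht) (Finset.mem_range.mp ht') h

lemma cycWindow_zero_univ (m : ℕ) : cycWindow m 0 m = Finset.univ := by
  ext j
  simp only [cycWindow, Finset.mem_filter, Finset.mem_univ, true_and, iff_true]
  exact ⟨(j : ℕ), j.2, by simp [Nat.mod_eq_of_lt j.2]⟩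

/-- Independence of the cyclic inequalities: with
`S(I) = min(|I|, 2k+2−|I|, k)`, (i) the cyclic inequality `C_{2k+1}(k+1,k)` applied to
the singleton regions `{1},…,{2k+1}` is violated (the cyclic combination equals `−1`),
while (ii) for every `1 ≤ l < k` and all pairwise disjoint nonempty blocks
`B_1,…,B_{2l+1} ⊆ {1,…,2k+2}`, the coarse-grained entropies satisfy the cyclic
inequality `C_{2l+1}(l+1,l) ≥ 0`. -/
theorem stmt18 (k : ℕ) (hk : 1 ≤ k) :
    ((∑ i ∈ Finset.range (2 * k + 1),
        Sspec k ((cycWindow (2 * k + 1) i (k + 1)).image (Fin.castLE (by omega))))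
      - (∑ i ∈ Finset.range (2 * k + 1),
        Sspec k ((cycWindow (2 * k + 1) i k).image (Fin.castLE (by omega))))
      - Sspec k ((Finset.univ : Finset (Fin (2 * k + 1))).image (Fin.castLE (by omega)))
      = -1) ∧
    (∀ l : ℕ, 1 ≤ l → l < k → ∀ B : Fin (2 * l + 1) → Finset (Fin (2 * k + 2)),
      (∀ j, (B j).Nonempty) → (∀ j j', j ≠ j' → Disjoint (B j) (B j')) →
      0 ≤ (∑ i ∈ Finset.range (2 * l + 1),
            Sspec k ((cycWindow (2 * l + 1) i (l + 1)).biUnion B))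
          - (∑ i ∈ Finset.range (2 * l + 1),
            Sspec k ((cycWindow (2 * l + 1) i l).biUnion B))
          - Sspec k ((Finset.univ : Finset (Fin (2 * l + 1))).biUnion B)) := by
  have hm21 : 0 < 2*k+1 := by omega
  constructor
  · -- part (i)
    have hS1 : ∀ i ∈ Finset.range (2*k+1),
        Sspec k ((cycWindow (2 * k + 1) i (k + 1)).image
          (Fin.castLE (by omega : 2*k+1 ≤ 2*k+2))) = (k:ℝ) := by
      intro i _
      rw [sspec_eq, Finset.card_image_of_injective _ (Fin.castLE_injective _),
        card_cycWindow _ _ _ hm21 (by omega)]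
      have h1 : Fent k ((k+1 : ℕ) : ℤ) = (k:ℤ) := by
        simp only [Fent]
        push_cast
        omega
      rw [h1]
      norm_num
    have hS2 : ∀ i ∈ Finset.range (2*k+1),
        Sspec k ((cycWindow (2 * k + 1) i k).image
          (Fin.castLE (by omega : 2*k+1 ≤ 2*k+2))) = (k:ℝ) := by
      intro i _
      rw [sspec_eq, Finset.card_image_of_injective _ (Fin.castLE_injective _),
        card_cycWindow _ _ _ hm21 (by omega)]
      have h1 : Fent k ((k : ℕ) : ℤ) = (k:ℤ) := by
        simp only [Fent]
        omega
      rw [h1]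
      norm_num
    have hS3 : Sspec k ((Finset.univ : Finset (Fin (2 * k + 1))).image
        (Fin.castLE (by omega : 2*k+1 ≤ 2*k+2))) = 1 := by
      rw [sspec_eq, Finset.card_image_of_injective _ (Fin.castLE_injective _),
        Finset.card_univ, Fintype.card_fin]
      have h1 : Fent k ((2*k+1 : ℕ) : ℤ) = 1 := by
        simp only [Fent]
        push_cast
        omega
      rw [h1]
      norm_num
    rw [Finset.sum_congr rfl hS1, Finset.sum_congr rfl hS2, hS3, Finset.sum_const,
      Finset.card_range]
    ring
  · -- part (ii)
    intro l hl1 hlk B hBne hBdis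
    have hm0 : 0 < 2*l+1 := by omega
    set c : ℕ → ℕ := fun j => (B ⟨j % (2*l+1), Nat.mod_lt j hm0⟩).card with hcdef
    have hper : ∀ j, c (j + (2*l+1)) = c j := by
      intro j
      simp only [hcdef, Nat.add_mod_right]
    have hc1 : ∀ j, 1 ≤ c j := fun j => Finset.card_pos.mpr (hBne _)
    have hwincard : ∀ i a, a ≤ 2*l+1 → ((cycWindow (2*l+1) i a).biUnion B).card
        = ∑ t ∈ Finset.range a, c (i+t) := by
      intro i a ha
      rw [Finset.card_biUnion (fun x _ y _ hxy => hBdis x y hxy),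
        sum_cycWindow (2*l+1) i a hm0 ha (fun j => (B j).card)]
    have hWc : ∀ i a, a ≤ 2*l+1 →
        Wsum c a i = (((cycWindow (2*l+1) i a).biUnion B).card : ℤ) := by
      intro i a ha
      rw [hwincard i a ha]
      unfold Wsum
      push_cast
      rfl
    have htotcard : ((Finset.univ : Finset (Fin (2*l+1))).biUnion B).card
        = ∑ t ∈ Finset.range (2*l+1), c t := by
      rw [← cycWindow_zero_univ (2*l+1), hwincard 0 (2*l+1) le_rfl]
      exact Finset.sum_congr rfl (fun t _ => by rw [Nat.zero_add])
    have hWtot : Wsum c (2*l+1) 0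
        = (((Finset.univ : Finset (Fin (2*l+1))).biUnion B).card : ℤ) := by
      rw [htotcard]
      unfold Wsum
      push_cast
      simp
    have hNub : Wsum c (2*l+1) 0 ≤ 2*k+2 := by
      rw [hWtot]
      have h := Finset.card_le_univ ((Finset.univ : Finset (Fin (2*l+1))).biUnion B)
      rw [Fintype.card_fin] at h
      exact_mod_cast h
    have key := core k l c hl1 hlk hper hc1 hNub
    have e1 : ∑ i ∈ Finset.range (2*l+1), Sspec k ((cycWindow (2*l+1) i (l + 1)).biUnion B)
        = ((∑ i ∈ Finset.range (2*l+1), Fent k (Wsum c (l+1) i) : ℤ) : ℝ) := by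
      push_cast
      refine Finset.sum_congr rfl (fun i _ => ?_)
      rw [sspec_eq, hWc i (l+1) (by omega)]
    have e2 : ∑ i ∈ Finset.range (2*l+1), Sspec k ((cycWindow (2*l+1) i l).biUnion B)
        = ((∑ i ∈ Finset.range (2*l+1), Fent k (Wsum c l i) : ℤ) : ℝ) := by
      push_cast
      refine Finset.sum_congr rfl (fun i _ => ?_)
      rw [sspec_eq, hWc i l (by omega)]
    have e3 : Sspec k ((Finset.univ : Finset (Fin (2*l+1))).biUnion B)
        = ((Fent k (Wsum c (2*l+1) 0) : ℤ) : ℝ) := by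
      rw [sspec_eq, hWtot]
    rw [e1, e2, e3]
    have hz : (0:ℤ) ≤ (∑ i ∈ Finset.range (2*l+1), Fent k (Wsum c (l+1) i))
        - (∑ i ∈ Finset.range (2*l+1), Fent k (Wsum c l i)) - Fent k (Wsum c (2*l+1) 0) := by
      omega
    exact_mod_cast hz
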